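/- Let κ be an infinite cardinal, α an ordinal, let ⟨𝓕_{β,η} : (β,η) ∈ α × κ⟩ be a stratified set of filters on κ, and let C ⊆ α × κ. Then the closure iteration ⟨C_ξ⟩ stabilizes at step κ^+: C_{κ^+ + 1} = C_{κ^+}. -/

import Mathlib

open Cardinal Set

universe u

/-- A stratified set of filters on `κ` (indexed by pairs `(β, η) ∈ α × κ`): a matrix of
proper filters such that (i) there is a choice of sets `c β η ∈ F β η` with each row
`⟨c β η : η < κ⟩` pairwise disjoint, and (ii) whenever `β < δ < α`, `η < κ` and
`G ∈ F β η`, the set `{ζ < κ : G ∈ F δ ζ}` has cardinality `κ`. -/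
def IsStratified {K : Type u} (α : Ordinal.{u}) (F : Ordinal.{u} → K → Filter K) : Prop :=
  (∀ β < α, ∀ η : K, (F β η).NeBot) ∧
  (∃ c : Ordinal.{u} → K → Set K,
      (∀ β < α, ∀ η : K, c β η ∈ F β η) ∧
      (∀ β < α, ∀ η ζ : K, η ≠ ζ → Disjoint (c β η) (c β ζ))) ∧
  (∀ β δ : Ordinal.{u}, β < δ → δ < α → ∀ η : K, ∀ G ∈ F β η,
      #{ζ : K | G ∈ F δ ζ} = #K)

/-- The closure iteration: `C₀ = C`; `C_{ξ+1} = C_ξ ∪ {(β,η) : ∃ ε, β < ε < α and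
∃ G ∈ F β η with #{ζ < κ : G ∈ F ε ζ and (ε,ζ) ∉ C_ξ} < κ}`; and at limits
`C_λ = ⋃_{ξ<λ} C_ξ`. -/
noncomputable def closIter {K : Type u} (α : Ordinal.{u}) (F : Ordinal.{u} → K → Filter K)
    (C : Set (Ordinal.{u} × K)) : Ordinal.{u} → Set (Ordinal.{u} × K) := fun ξ =>
  Ordinal.limitRecOn ξ C
    (fun _ Cp => Cp ∪ {p : Ordinal.{u} × K | ∃ ε : Ordinal.{u}, p.1 < ε ∧ ε < α ∧
        ∃ G ∈ F p.1 p.2, #{ζ : K | G ∈ F ε ζ ∧ (ε, ζ) ∉ Cp} < #K})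
    (fun o _ ih => ⋃ (ξ' : Ordinal.{u}) (h : ξ' < o), ih ξ' h)

lemma closIter_succ {K : Type u} (α : Ordinal.{u}) (F : Ordinal.{u} → K → Filter K)
    (C : Set (Ordinal.{u} × K)) (ξ : Ordinal.{u}) :
    closIter α F C (Order.succ ξ) = closIter α F C ξ ∪
      {p : Ordinal.{u} × K | ∃ ε : Ordinal.{u}, p.1 < ε ∧ ε < α ∧
        ∃ G ∈ F p.1 p.2, #{ζ : K | G ∈ F ε ζ ∧ (ε, ζ) ∉ closIter α F C ξ} < #K} := by
  unfold closIter
  rw [Ordinal.limitRecOn_succ]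

lemma closIter_limit {K : Type u} (α : Ordinal.{u}) (F : Ordinal.{u} → K → Filter K)
    (C : Set (Ordinal.{u} × K)) {ξ : Ordinal.{u}} (hξ : Order.IsSuccLimit ξ) :
    closIter α F C ξ = ⋃ (ξ' : Ordinal.{u}) (_ : ξ' < ξ), closIter α F C ξ' := by
  unfold closIter
  rw [Ordinal.limitRecOn_limit _ _ _ _ hξ]

lemma closIter_mono {K : Type u} (α : Ordinal.{u}) (F : Ordinal.{u} → K → Filter K)
    (C : Set (Ordinal.{u} × K)) : ∀ ξ' ξ : Ordinal.{u}, ξ ≤ ξ' →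
    closIter α F C ξ ⊆ closIter α F C ξ' := by
  intro ξ'
  induction ξ' using Ordinal.induction with
  | h ξ' IH =>
    intro ξ hle
    rcases eq_or_lt_of_le hle with rfl | hlt
    · exact subset_rfl
    rcases Ordinal.zero_or_succ_or_isSuccLimit ξ' with h0 | ⟨δ, rfl⟩ | hl
    · exact absurd (h0 ▸ hlt) (not_lt_zero (a := ξ))
    · rw [closIter_succ]
      exact (IH δ (Order.lt_succ δ) ξ (Order.lt_succ_iff.mp hlt)).trans subset_union_left
    · rw [closIter_limit α F C hl]
      exact subset_iUnion₂ (s := fun ξ'' _ => closIter α F C ξ'') ξ hlt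

/-- For a stratified set of filters on `κ` and any `C ⊆ α × κ`, the closure iteration
stabilizes at step `κ⁺`: `C_{κ⁺ + 1} = C_{κ⁺}`. -/
theorem closIter_stabilizes {K : Type u} (hK : aleph0 ≤ #K)
    (α : Ordinal.{u}) (F : Ordinal.{u} → K → Filter K) (hF : IsStratified α F)
    (C : Set (Ordinal.{u} × K)) (hC : ∀ p ∈ C, p.1 < α) :
    closIter α F C ((Order.succ (#K)).ord + 1) = closIter α F C (Order.succ (#K)).ord := by
  set O : Ordinal.{u} := (Order.succ (#K)).ord with hO
  have hOlim : Order.IsSuccLimit O := Cardinal.isSuccLimit_ord (hK.trans (Order.le_succ _))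
  rw [Ordinal.add_one_eq_succ, closIter_succ]
  apply Set.Subset.antisymm _ subset_union_left
  apply union_subset subset_rfl
  rintro p ⟨ε, hβε, hεα, G, hG, hcard⟩
  -- each point of `closIter O` appears at some earlier stage
  have hmem : ∀ ζ : K, (ε, ζ) ∈ closIter α F C O → ∃ ξ < O, (ε, ζ) ∈ closIter α F C ξ := by
    intro ζ h
    rw [closIter_limit α F C hOlim] at h
    simpa using h
  classical
  set T := {ζ : K // (ε, ζ) ∈ closIter α F C O} with hT
  choose f hf1 hf2 using fun t : T => hmem t.1 t.2
  have hcof : O.cof = Order.succ (#K) := (Cardinal.isRegular_succ hK).cof_eq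
  have hTlt : #T < O.cof := by
    rw [hcof]
    exact lt_of_le_of_lt (Cardinal.mk_subtype_le _) (Order.lt_succ _)
  have hsup : iSup f < O := Ordinal.iSup_lt_of_lt_cof hTlt hf1
  set ξ := iSup f with hξ
  have hsub : {ζ : K | G ∈ F ε ζ ∧ (ε, ζ) ∉ closIter α F C ξ} ⊆
      {ζ : K | G ∈ F ε ζ ∧ (ε, ζ) ∉ closIter α F C O} := by
    rintro ζ ⟨h1, h2⟩
    refine ⟨h1, fun hm => h2 ?_⟩
    exact closIter_mono α F C ξ (f ⟨ζ, hm⟩) (Ordinal.le_iSup f ⟨ζ, hm⟩) (hf2 ⟨ζ, hm⟩)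
  have hcard' : #{ζ : K | G ∈ F ε ζ ∧ (ε, ζ) ∉ closIter α F C ξ} < #K :=
    lt_of_le_of_lt (Cardinal.mk_le_mk_of_subset hsub) hcard
  have hstep : p ∈ closIter α F C (Order.succ ξ) := by
    rw [closIter_succ]
    exact Or.inr ⟨ε, hβε, hεα, G, hG, hcard'⟩
  rw [closIter_limit α F C hOlim]
  exact mem_iUnion₂.mpr ⟨Order.succ ξ, hOlim.succ_lt hsup, hstep⟩
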